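/- Suppose σ̃_{j,m} > 0. Then ‖K*K ṽ_{j,m} − σ̃_{j,m}² ṽ_{j,m}‖_{L²(0,1)} ≤ C_K²/(6m²) + C_K³/(6·σ̃_{j,m}·m²); in other words, ṽ_{j,m} is an approximate eigenfunction of K*K with approximate eigenvalue σ̃_{j,m}². -/

import Mathlib

open Real MeasureTheory

/-- The unit interval `[0,1]`. -/
def I01 : Set ℝ := Set.Icc 0 1

/-- `κ : [0,1]² → ℝ` is twice continuously differentiable, with partial derivatives
`κ10 = ∂ₓκ`, `κ01 = ∂ᵧκ`, `κ20 = ∂ₓ²κ`, `κ11 = ∂ₓ∂ᵧκ`, `κ02 = ∂ᵧ²κ`, and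
`CK` bounds the absolute values of `κ` and all its partial derivatives of order `≤ 2`
on `[0,1]²` (in the paper, `CK` is the supremum of these quantities). -/
def IsC2KernelWith (κ κ10 κ01 κ20 κ11 κ02 : ℝ → ℝ → ℝ) (CK : ℝ) : Prop :=
  (∀ x ∈ I01, ∀ y ∈ I01, HasDerivWithinAt (fun x' => κ x' y) (κ10 x y) I01 x) ∧
  (∀ x ∈ I01, ∀ y ∈ I01, HasDerivWithinAt (fun y' => κ x y') (κ01 x y) I01 y) ∧
  (∀ x ∈ I01, ∀ y ∈ I01, HasDerivWithinAt (fun x' => κ10 x' y) (κ20 x y) I01 x) ∧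
  (∀ x ∈ I01, ∀ y ∈ I01, HasDerivWithinAt (fun y' => κ10 x y') (κ11 x y) I01 y) ∧
  (∀ x ∈ I01, ∀ y ∈ I01, HasDerivWithinAt (fun y' => κ01 x y') (κ02 x y) I01 y) ∧
  ContinuousOn (fun p : ℝ × ℝ => κ p.1 p.2) (I01 ×ˢ I01) ∧
  ContinuousOn (fun p : ℝ × ℝ => κ10 p.1 p.2) (I01 ×ˢ I01) ∧
  ContinuousOn (fun p : ℝ × ℝ => κ01 p.1 p.2) (I01 ×ˢ I01) ∧
  ContinuousOn (fun p : ℝ × ℝ => κ20 p.1 p.2) (I01 ×ˢ I01) ∧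
  ContinuousOn (fun p : ℝ × ℝ => κ11 p.1 p.2) (I01 ×ˢ I01) ∧
  ContinuousOn (fun p : ℝ × ℝ => κ02 p.1 p.2) (I01 ×ˢ I01) ∧
  (∀ x ∈ I01, ∀ y ∈ I01,
    |κ x y| ≤ CK ∧ |κ10 x y| ≤ CK ∧ |κ01 x y| ≤ CK ∧
    |κ20 x y| ≤ CK ∧ |κ11 x y| ≤ CK ∧ |κ02 x y| ≤ CK)

/-- The midpoint grid points `ξ_{l,m} = (2l−1)/(2m)`. -/
noncomputable def gridPt (m l : ℕ) : ℝ := (2 * (l : ℝ) - 1) / (2 * (m : ℝ))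



section AuxLemmas
open intervalIntegral

lemma integral_abs_zero (x : ℝ) : abs (∫ u in (0:ℝ)..x, |u|) = x^2/2 := by
  rcases le_or_gt 0 x with hx | hx
  · rw [intervalIntegral.integral_congr (g := fun u => u) ?_, integral_id]
    · rw [show (x^2 - 0^2)/2 = x^2/2 by ring, abs_of_nonneg (by positivity)]
    · intro u hu
      rw [Set.uIcc_of_le hx] at hu
      exact abs_of_nonneg hu.1
  · rw [intervalIntegral.integral_congr (g := fun u => -u) ?_]
    · rw [intervalIntegral.integral_neg, integral_id, abs_neg,
        show (x^2 - 0^2)/2 = x^2/2 by ring, abs_of_nonneg (by positivity)]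
    · intro u hu
      rw [Set.uIcc_of_ge hx.le] at hu
      exact abs_of_nonpos hu.2

lemma integral_abs_sub (c t : ℝ) : abs (∫ s in c..t, |s - c|) = (t - c)^2/2 := by
  have h : (∫ s in c..t, |s - c|) = ∫ u in (0:ℝ)..(t - c), |u| := by
    simpa using (intervalIntegral.integral_comp_sub_right (fun u => |u|) c)
  rw [h, integral_abs_zero]

lemma taylor2 {f f' f'' : ℝ → ℝ} {a b M : ℝ}
    (hf : ∀ t ∈ Set.Icc a b, HasDerivWithinAt f (f' t) (Set.Icc a b) t)
    (hf' : ∀ t ∈ Set.Icc a b, HasDerivWithinAt f' (f'' t) (Set.Icc a b) t)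
    (hM : ∀ t ∈ Set.Icc a b, |f'' t| ≤ M)
    {c t : ℝ} (hc : c ∈ Set.Icc a b) (ht : t ∈ Set.Icc a b) :
    |f t - f c - f' c * (t - c)| ≤ M * (t - c) ^ 2 / 2 := by
  have hM0 : 0 ≤ M := le_trans (abs_nonneg _) (hM c hc)
  have hlip : ∀ s ∈ Set.Icc a b, |f' s - f' c| ≤ M * |s - c| := by
    intro s hs
    simpa [Real.norm_eq_abs] using
      Convex.norm_image_sub_le_of_norm_hasDerivWithin_le hf'
        (fun u hu => by simpa [Real.norm_eq_abs] using hM u hu) (convex_Icc a b) hc hs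
  have hfc : ContinuousOn f (Set.Icc a b) := fun s hs => (hf s hs).continuousWithinAt
  have hf'c : ContinuousOn f' (Set.Icc a b) := fun s hs => (hf' s hs).continuousWithinAt
  -- FTC : ∫ s in c..t, f' s = f t - f c
  have hftc : (∫ s in c..t, f' s) = f t - f c := by
    rcases le_total c t with hct | htc
    · have hsub : Set.Icc c t ⊆ Set.Icc a b := Set.Icc_subset_Icc hc.1 ht.2
      exact integral_eq_sub_of_hasDeriv_right_of_le hct (hfc.mono hsub)
        (fun x hx => by
          have hx' : x ∈ Set.Ioo a b := ⟨lt_of_le_of_lt hc.1 hx.1, lt_of_lt_of_le hx.2 ht.2⟩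
          exact ((hf x (Set.Ioo_subset_Icc_self hx')).hasDerivAt
            (Icc_mem_nhds hx'.1 hx'.2)).hasDerivWithinAt)
        ((hf'c.mono hsub).intervalIntegrable_of_Icc hct)
    · have hsub : Set.Icc t c ⊆ Set.Icc a b := Set.Icc_subset_Icc ht.1 hc.2
      rw [intervalIntegral.integral_symm]
      have : (∫ s in t..c, f' s) = f c - f t := by
        exact integral_eq_sub_of_hasDeriv_right_of_le htc (hfc.mono hsub)
          (fun x hx => by
            have hx' : x ∈ Set.Ioo a b := ⟨lt_of_le_of_lt ht.1 hx.1, lt_of_lt_of_le hx.2 hc.2⟩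
            exact ((hf x (Set.Ioo_subset_Icc_self hx')).hasDerivAt
              (Icc_mem_nhds hx'.1 hx'.2)).hasDerivWithinAt)
          ((hf'c.mono hsub).intervalIntegrable_of_Icc htc)
      rw [this]; ring
  have hint : IntervalIntegrable f' volume c t :=
    (hf'c.mono (Set.uIcc_subset_Icc hc ht)).intervalIntegrable
  have key : f t - f c - f' c * (t - c) = ∫ s in c..t, (f' s - f' c) := by
    rw [intervalIntegral.integral_sub hint intervalIntegrable_const, hftc,
      intervalIntegral.integral_const, smul_eq_mul]
    ring
  rw [key]
  have step : ‖∫ s in c..t, (f' s - f' c)‖ ≤ abs (∫ s in c..t, M * |s - c|) := by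
    refine intervalIntegral.norm_integral_le_abs_of_norm_le (f := fun s => f' s - f' c)
      (μ := volume) (g := fun s => M * |s - c|) ?_ ?_
    · filter_upwards [ae_restrict_mem measurableSet_uIoc] with s hs
      simpa [Real.norm_eq_abs] using hlip s (Set.uIcc_subset_Icc hc ht (Set.Ioc_subset_Icc_self hs))
    · exact (continuous_const.mul (continuous_abs.comp ((continuous_id.sub (continuous_const (y := c)))))).intervalIntegrable _ _
  calc |∫ s in c..t, (f' s - f' c)| ≤ abs (∫ s in c..t, M * |s - c|) := step
    _ = M * (t - c)^2 / 2 := by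
        rw [intervalIntegral.integral_const_mul, abs_mul, abs_of_nonneg hM0, integral_abs_sub]
        ring

lemma midpoint_step {f f' f'' : ℝ → ℝ} {a b M : ℝ} (hab : a ≤ b)
    (hf : ∀ t ∈ Set.Icc a b, HasDerivWithinAt f (f' t) (Set.Icc a b) t)
    (hf' : ∀ t ∈ Set.Icc a b, HasDerivWithinAt f' (f'' t) (Set.Icc a b) t)
    (hM : ∀ t ∈ Set.Icc a b, |f'' t| ≤ M) :
    |(∫ t in a..b, f t) - (b - a) * f ((a + b) / 2)| ≤ M * (b - a) ^ 3 / 24 := by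
  set c : ℝ := (a + b) / 2 with hcdef
  have hc : c ∈ Set.Icc a b := ⟨by simp only [hcdef]; linarith, by simp only [hcdef]; linarith⟩
  have hM0 : 0 ≤ M := le_trans (abs_nonneg _) (hM c hc)
  have hfc : ContinuousOn f (Set.Icc a b) := fun s hs => (hf s hs).continuousWithinAt
  have hfint : IntervalIntegrable f volume a b := hfc.intervalIntegrable_of_Icc hab
  have hlin : IntervalIntegrable (fun t => f c + f' c * (t - c)) volume a b :=
    (continuous_const.add (continuous_const.mul (continuous_sub_right c))).intervalIntegrable _ _
  have hlinval : (∫ t in a..b, (f c + f' c * (t - c))) = (b - a) * f c := by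
    rw [intervalIntegral.integral_add (f := fun _ => f c) (g := fun t => f' c * (t - c)) intervalIntegrable_const
      ((continuous_const.mul (continuous_sub_right c)).intervalIntegrable _ _),
      intervalIntegral.integral_const, intervalIntegral.integral_const_mul]
    have : (∫ t in a..b, (t - c)) = ∫ u in (a - c)..(b - c), u := by
      simpa using (intervalIntegral.integral_comp_sub_right (fun u => u) c)
    rw [this, integral_id, smul_eq_mul]
    have h1 : b - c = (b - a) / 2 := by rw [hcdef]; ring
    have h2 : a - c = -((b - a) / 2) := by rw [hcdef]; ring
    rw [h1, h2]; ring
  have key : (∫ t in a..b, f t) - (b - a) * f c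
      = ∫ t in a..b, (f t - (f c + f' c * (t - c))) := by
    rw [intervalIntegral.integral_sub hfint hlin, hlinval]
  rw [key]
  have step : ‖∫ t in a..b, (f t - (f c + f' c * (t - c)))‖
      ≤ abs (∫ t in a..b, M * (t - c) ^ 2 / 2) := by
    refine intervalIntegral.norm_integral_le_abs_of_norm_le
      (f := fun t => f t - (f c + f' c * (t - c))) (μ := volume)
      (g := fun t => M * (t - c) ^ 2 / 2) ?_ ?_
    · filter_upwards [ae_restrict_mem measurableSet_uIoc] with s hs
      have hs' : s ∈ Set.Icc a b :=
        Set.Ioc_subset_Icc_self (by rwa [Set.uIoc_of_le hab] at hs)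
      simpa [Real.norm_eq_abs, sub_add_eq_sub_sub] using taylor2 hf hf' hM hc hs'
    · exact ((continuous_const.mul ((continuous_sub_right c).pow 2)).div_const 2).intervalIntegrable _ _
  have hval : (∫ t in a..b, M * (t - c) ^ 2 / 2) = M * (b - a) ^ 3 / 24 := by
    have h0 : (∫ t in a..b, M * (t - c) ^ 2 / 2) = M / 2 * ∫ t in a..b, (t - c) ^ 2 := by
      rw [← intervalIntegral.integral_const_mul]
      congr 1; ext t; ring
    have h1 : (∫ t in a..b, (t - c) ^ 2) = ∫ u in (a - c)..(b - c), u ^ 2 := by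
      exact intervalIntegral.integral_comp_sub_right (fun u => u ^ 2) c
    have h2 : (∫ u in (a - c)..(b - c), u ^ 2) = ((b - c) ^ 3 - (a - c) ^ 3) / 3 := by
      rw [integral_pow]; norm_num
    rw [h0, h1, h2]
    have h3 : b - c = (b - a) / 2 := by rw [hcdef]; ring
    have h4 : a - c = -((b - a) / 2) := by rw [hcdef]; ring
    rw [h3, h4]; ring
  calc |∫ t in a..b, (f t - (f c + f' c * (t - c)))| ≤ abs (∫ t in a..b, M * (t - c) ^ 2 / 2) := step
    _ = M * (b - a) ^ 3 / 24 := by rw [hval]; exact abs_of_nonneg (by nlinarith [pow_nonneg (sub_nonneg.2 hab) 3])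

lemma lipschitz_continuousOn {g : ℝ → ℝ} {L : ℝ} {s : Set ℝ}
    (h : ∀ x ∈ s, ∀ y ∈ s, |g x - g y| ≤ L * |x - y|) : ContinuousOn g s := by
  apply LipschitzOnWith.continuousOn (K := Real.toNNReal L)
  rw [lipschitzOnWith_iff_dist_le_mul]
  intro x hx y hy
  rw [Real.dist_eq, Real.dist_eq]
  calc |g x - g y| ≤ L * |x - y| := h x hx y hy
    _ ≤ (Real.toNNReal L) * |x - y| := by
        apply mul_le_mul_of_nonneg_right _ (abs_nonneg _)
        rw [Real.coe_toNNReal']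
        exact le_max_left _ _

lemma cs_sum_abs {m : ℕ} {w : ℕ → ℝ} (h : ∑ l ∈ Finset.Icc 1 m, w l ^ 2 = 1) :
    ∑ l ∈ Finset.Icc 1 m, |w l| ≤ Real.sqrt m := by
  have hcard : (Finset.Icc 1 m).card = m := by simp [Nat.card_Icc]
  have h2 : (∑ l ∈ Finset.Icc 1 m, |w l|) ^ 2 ≤ m := by
    calc (∑ l ∈ Finset.Icc 1 m, |w l|) ^ 2
        ≤ (Finset.Icc 1 m).card * ∑ l ∈ Finset.Icc 1 m, |w l| ^ 2 := sq_sum_le_card_mul_sum_sq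
      _ = m := by simp only [sq_abs, h, hcard]; ring
  have h0 : 0 ≤ ∑ l ∈ Finset.Icc 1 m, |w l| := Finset.sum_nonneg (fun l _ => abs_nonneg _)
  calc ∑ l ∈ Finset.Icc 1 m, |w l| = Real.sqrt ((∑ l ∈ Finset.Icc 1 m, |w l|) ^ 2) :=
        (Real.sqrt_sq h0).symm
    _ ≤ Real.sqrt m := Real.sqrt_le_sqrt h2

lemma gridPt_mem {m : ℕ} (hm : 1 ≤ m) {l : ℕ} (hl : l ∈ Finset.Icc 1 m) : gridPt m l ∈ I01 := by
  rw [Finset.mem_Icc] at hl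
  have hm' : (1:ℝ) ≤ (m:ℝ) := by exact_mod_cast hm
  have hl1 : (1:ℝ) ≤ (l:ℝ) := by exact_mod_cast hl.1
  have hl2 : (l:ℝ) ≤ (m:ℝ) := by exact_mod_cast hl.2
  simp only [gridPt, I01, Set.mem_Icc]
  constructor
  · apply div_nonneg (by linarith) (by linarith)
  · rw [div_le_one (by linarith)]; linarith

lemma midpoint_rule {f f' f'' : ℝ → ℝ} {M : ℝ} {m : ℕ} (hm : 1 ≤ m)
    (hf : ∀ t ∈ I01, HasDerivWithinAt f (f' t) I01 t)
    (hf' : ∀ t ∈ I01, HasDerivWithinAt f' (f'' t) I01 t)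
    (hM : ∀ t ∈ I01, |f'' t| ≤ M) :
    |(∫ t in (0:ℝ)..1, f t) - (1 / m) * ∑ l ∈ Finset.Icc 1 m, f (gridPt m l)|
      ≤ M / (24 * m ^ 2) := by
  have hm' : (1:ℝ) ≤ (m:ℝ) := by exact_mod_cast hm
  have hmpos : (0:ℝ) < m := by linarith
  have hM0 : 0 ≤ M := le_trans (abs_nonneg _) (hM (1/2) (by constructor <;> norm_num))
  set a : ℕ → ℝ := fun k => k / m with ha
  have hle : ∀ k : ℕ, a k ≤ a (k+1) := by
    intro k
    rw [div_le_div_iff_of_pos_right hmpos]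
    push_cast; linarith
  have hsub : ∀ k, k < m → Set.Icc (a k) (a (k+1)) ⊆ I01 := by
    intro k hk
    apply Set.Icc_subset_Icc
    · exact div_nonneg (Nat.cast_nonneg k) hmpos.le
    · rw [div_le_one hmpos]
      exact_mod_cast Nat.succ_le_of_lt hk
  have hfc : ContinuousOn f I01 := fun s hs => (hf s hs).continuousWithinAt
  have hint : ∀ k, k < m → IntervalIntegrable f volume (a k) (a (k+1)) := by
    intro k hk
    exact (hfc.mono (hsub k hk)).intervalIntegrable_of_Icc (hle k)
  have hsum : ∑ k ∈ Finset.range m, (∫ t in (a k)..(a (k+1)), f t) = ∫ t in (0:ℝ)..1, f t := by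
    rw [intervalIntegral.sum_integral_adjacent_intervals hint]
    norm_num [ha, div_self hmpos.ne']
  have hstep : ∀ k, k < m →
      |(∫ t in (a k)..(a (k+1)), f t) - (1 / m) * f (gridPt m (k+1))| ≤ M / (24 * m ^ 3) := by
    intro k hk
    have h1 : a (k+1) - a k = 1 / m := by
      simp only [ha]; push_cast; field_simp; ring
    have h2 : (a k + a (k+1)) / 2 = gridPt m (k+1) := by
      simp only [ha, gridPt]; push_cast; field_simp; ring
    have := midpoint_step (hle k)
      (fun t ht => (hf t (hsub k hk ht)).mono (hsub k hk))
      (fun t ht => (hf' t (hsub k hk ht)).mono (hsub k hk))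
      (fun t ht => hM t (hsub k hk ht))
    rw [h1, h2] at this
    calc |(∫ t in (a k)..(a (k+1)), f t) - (1 / m) * f (gridPt m (k+1))|
        ≤ M * (1 / m) ^ 3 / 24 := this
      _ = M / (24 * m ^ 3) := by rw [div_pow, one_pow, mul_div_assoc, div_div]; ring_nf
  have hreidx : ∑ l ∈ Finset.Icc 1 m, f (gridPt m l)
      = ∑ k ∈ Finset.range m, f (gridPt m (k+1)) := by
    rw [← Finset.Ico_add_one_right_eq_Icc, Finset.sum_Ico_eq_sum_range]
    simp [Nat.add_comm]
  have hdiff : (∫ t in (0:ℝ)..1, f t) - (1 / m) * ∑ l ∈ Finset.Icc 1 m, f (gridPt m l)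
      = ∑ k ∈ Finset.range m, ((∫ t in (a k)..(a (k+1)), f t) - (1 / m) * f (gridPt m (k+1))) := by
    rw [Finset.sum_sub_distrib, hsum, hreidx, Finset.mul_sum]
  rw [hdiff]
  calc |∑ k ∈ Finset.range m, ((∫ t in (a k)..(a (k+1)), f t) - (1 / m) * f (gridPt m (k+1)))|
      ≤ ∑ k ∈ Finset.range m, |(∫ t in (a k)..(a (k+1)), f t) - (1 / m) * f (gridPt m (k+1))| :=
        Finset.abs_sum_le_sum_abs _ _
    _ ≤ ∑ k ∈ Finset.range m, M / (24 * m ^ 3) :=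
        Finset.sum_le_sum (fun k hk => hstep k (Finset.mem_range.1 hk))
    _ = m * (M / (24 * m ^ 3)) := by rw [Finset.sum_const, Finset.card_range]; ring
    _ = M / (24 * m ^ 2) := by field_simp

end AuxLemmas

/-- Suppose `w̃_{j,m}, z̃_{j,m} ∈ ℝᵐ` are unit vectors and `σ̃_{j,m} > 0`
satisfy `A_mᵀ w̃_{j,m} = σ̃_{j,m} z̃_{j,m}` and `A_m z̃_{j,m} = σ̃_{j,m} w̃_{j,m}`, and set
`ṽ_{j,m} = (1/(σ̃_{j,m}√m)) Σ_l (w̃_{j,m})_l κ(ξ_{l,m},·)`.  Then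
`‖K*K ṽ_{j,m} − σ̃_{j,m}² ṽ_{j,m}‖_{L²(0,1)} ≤ C_K²/(6m²) + C_K³/(6 σ̃_{j,m} m²)`,
i.e. `ṽ_{j,m}` is an approximate eigenfunction of `K*K` with approximate
eigenvalue `σ̃_{j,m}²`. -/
theorem stmt_13 (κ κ10 κ01 κ20 κ11 κ02 : ℝ → ℝ → ℝ) (CK : ℝ)
    (hker : IsC2KernelWith κ κ10 κ01 κ20 κ11 κ02 CK)
    (m : ℕ) (hm : 1 ≤ m)
    (w z : ℕ → ℝ) (σt : ℝ) (hσt : 0 < σt)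
    (hwunit : (∑ l ∈ Finset.Icc 1 m, w l ^ 2) = 1)
    (hzunit : (∑ l ∈ Finset.Icc 1 m, z l ^ 2) = 1)
    (hAt : ∀ i ∈ Finset.Icc 1 m,
      (∑ l ∈ Finset.Icc 1 m, (κ (gridPt m l) (gridPt m i) / m) * w l) = σt * z i)
    (hA : ∀ i ∈ Finset.Icc 1 m,
      (∑ l ∈ Finset.Icc 1 m, (κ (gridPt m i) (gridPt m l) / m) * z l) = σt * w i)
    (vt : ℝ → ℝ)
    (hvt : ∀ x : ℝ, vt x = (1 / (σt * Real.sqrt m)) * ∑ l ∈ Finset.Icc 1 m, w l * κ (gridPt m l) x) :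
    Real.sqrt (∫ x in (0:ℝ)..1,
        ((∫ y in (0:ℝ)..1, κ y x * ∫ z' in (0:ℝ)..1, κ y z' * vt z') - σt ^ 2 * vt x) ^ 2)
      ≤ CK ^ 2 / (6 * (m : ℝ) ^ 2) + CK ^ 3 / (6 * σt * (m : ℝ) ^ 2) := by
  obtain ⟨hd10, hd01, hd20, hd11, hd02, hcκ, hcκ10, hcκ01, hcκ20, hcκ11, hcκ02, hbd⟩ := hker
  have hm' : (1:ℝ) ≤ (m:ℝ) := by exact_mod_cast hm
  have hmpos : (0:ℝ) < m := by linarith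
  have hsm : (0:ℝ) < Real.sqrt m := Real.sqrt_pos.2 hmpos
  have h01 : (0:ℝ) ≤ 1 := by norm_num
  have hI : Set.uIcc (0:ℝ) 1 = I01 := by rw [Set.uIcc_of_le h01]; rfl
  have hIoc : Set.uIoc (0:ℝ) 1 ⊆ I01 := by
    rw [Set.uIoc_of_le h01]; exact Set.Ioc_subset_Icc_self
  set S := Finset.Icc 1 m with hS
  set ξ : ℕ → ℝ := gridPt m with hξ
  have hξmem : ∀ l ∈ S, ξ l ∈ I01 := fun l hl => gridPt_mem hm hl
  have half : (1/2 : ℝ) ∈ I01 := by constructor <;> norm_num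
  have hCK : 0 ≤ CK := le_trans (abs_nonneg _) (hbd _ half _ half).1
  set c0 : ℝ := 1 / (σt * Real.sqrt m) with hc0
  have hc0pos : 0 < c0 := by positivity
  set ε1 : ℝ := CK ^ 2 / (6 * (m:ℝ) ^ 2) with hε1
  have hε1nn : 0 ≤ ε1 := by positivity
  have prod_bd : ∀ p q : ℝ, |p| ≤ CK → |q| ≤ CK → |p * q| ≤ CK ^ 2 := by
    intro p q hp hq
    rw [abs_mul, sq]
    exact mul_le_mul hp hq (abs_nonneg _) hCK
  -- slice continuity
  have hcy : ∀ y ∈ I01, ContinuousOn (fun t => κ y t) I01 := by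
    intro y hy
    exact hcκ.comp ((continuous_const.prodMk continuous_id).continuousOn)
      (fun t ht => Set.mk_mem_prod hy ht)
  have hcx : ∀ x ∈ I01, ContinuousOn (fun t => κ t x) I01 := by
    intro x hx
    exact hcκ.comp ((continuous_id.prodMk continuous_const).continuousOn)
      (fun t ht => Set.mk_mem_prod ht hx)
  -- Lipschitz in each argument
  have hlip1 : ∀ t ∈ I01, ∀ y ∈ I01, ∀ y' ∈ I01, |κ y t - κ y' t| ≤ CK * |y - y'| := by
    intro t ht y hy y' hy'
    simpa [Real.norm_eq_abs] using
      Convex.norm_image_sub_le_of_norm_hasDerivWithin_le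
        (f := fun s => κ s t) (f' := fun s => κ10 s t)
        (fun s hs => hd10 s hs t ht)
        (fun s hs => by simpa [Real.norm_eq_abs] using (hbd s hs t ht).2.1)
        (convex_Icc 0 1) hy' hy
  have hlip2 : ∀ y ∈ I01, ∀ x ∈ I01, ∀ x' ∈ I01, |κ y x - κ y x'| ≤ CK * |x - x'| := by
    intro y hy x hx x' hx'
    simpa [Real.norm_eq_abs] using
      Convex.norm_image_sub_le_of_norm_hasDerivWithin_le
        (f := fun s => κ y s) (f' := fun s => κ01 y s)
        (fun s hs => hd01 y hy s hs)
        (fun s hs => by simpa [Real.norm_eq_abs] using (hbd y hy s hs).2.2.1)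
        (convex_Icc 0 1) hx' hx
  -- continuity and bound for vt
  have hvtcont : ContinuousOn vt I01 :=
    ContinuousOn.congr (f := fun x => c0 * ∑ l ∈ S, w l * κ (ξ l) x)
      (continuousOn_const.mul (continuousOn_finset_sum S
        (fun l hl => continuousOn_const.mul (hcy (ξ l) (hξmem l hl)))))
      (fun x _ => hvt x)
  have hcs : ∑ l ∈ S, |w l| ≤ Real.sqrt m := cs_sum_abs hwunit
  have hcsz : ∑ l ∈ S, |z l| ≤ Real.sqrt m := cs_sum_abs hzunit
  have hvtb : ∀ x ∈ I01, |vt x| ≤ CK / σt := by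
    intro x hx
    rw [hvt x, abs_mul]
    have h1 : |∑ l ∈ S, w l * κ (ξ l) x| ≤ Real.sqrt m * CK := by
      calc |∑ l ∈ S, w l * κ (ξ l) x| ≤ ∑ l ∈ S, |w l * κ (ξ l) x| :=
            Finset.abs_sum_le_sum_abs _ _
        _ ≤ ∑ l ∈ S, |w l| * CK := Finset.sum_le_sum (fun l hl => by
            rw [abs_mul]
            exact mul_le_mul_of_nonneg_left (hbd _ (hξmem l hl) _ hx).1 (abs_nonneg _))
        _ = (∑ l ∈ S, |w l|) * CK := (Finset.sum_mul _ _ _).symm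
        _ ≤ Real.sqrt m * CK := mul_le_mul_of_nonneg_right hcs hCK
    calc |c0| * |∑ l ∈ S, w l * κ (ξ l) x| ≤ c0 * (Real.sqrt m * CK) := by
          rw [abs_of_pos hc0pos]
          exact mul_le_mul_of_nonneg_left h1 hc0pos.le
      _ = CK / σt := by rw [hc0]; field_simp
  -- the inner integral F and its approximation Q
  set F : ℝ → ℝ := fun y => ∫ z' in (0:ℝ)..1, κ y z' * vt z' with hF
  set Q : ℝ → ℝ := fun y => c0 * (σt * ∑ i ∈ S, z i * κ y (ξ i)) with hQ
  have hQcont : ContinuousOn Q I01 :=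
    continuousOn_const.mul (continuousOn_const.mul (continuousOn_finset_sum S
      (fun i hi => continuousOn_const.mul (hcx (ξ i) (hξmem i hi)))))
  -- midpoint rule in the second variable
  have hmid1 : ∀ y ∈ I01, ∀ l ∈ S,
      |(∫ t in (0:ℝ)..1, κ y t * κ (ξ l) t) - (1 / m) * ∑ i ∈ S, κ y (ξ i) * κ (ξ l) (ξ i)|
        ≤ ε1 := by
    intro y hy l hl
    have hlm := hξmem l hl
    have h := midpoint_rule (m := m) (f := fun t => κ y t * κ (ξ l) t)
      (f' := fun t => κ01 y t * κ (ξ l) t + κ y t * κ01 (ξ l) t)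
      (f'' := fun t => (κ02 y t * κ (ξ l) t + κ01 y t * κ01 (ξ l) t)
        + (κ01 y t * κ01 (ξ l) t + κ y t * κ02 (ξ l) t))
      (M := 4 * CK ^ 2) hm
      (fun t ht => (hd01 y hy t ht).mul (hd01 (ξ l) hlm t ht))
      (fun t ht => ((hd02 y hy t ht).mul (hd01 (ξ l) hlm t ht)).add
        ((hd01 y hy t ht).mul (hd02 (ξ l) hlm t ht)))
      (fun t ht => by
        have b1 := prod_bd _ _ (hbd y hy t ht).2.2.2.2.2 (hbd (ξ l) hlm t ht).1
        have b2 := prod_bd _ _ (hbd y hy t ht).2.2.1 (hbd (ξ l) hlm t ht).2.2.1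
        have b3 := prod_bd _ _ (hbd y hy t ht).1 (hbd (ξ l) hlm t ht).2.2.2.2.2
        have hineq := abs_add_le (κ02 y t * κ (ξ l) t + κ01 y t * κ01 (ξ l) t)
          (κ01 y t * κ01 (ξ l) t + κ y t * κ02 (ξ l) t)
        have hineq1 := abs_add_le (κ02 y t * κ (ξ l) t) (κ01 y t * κ01 (ξ l) t)
        have hineq2 := abs_add_le (κ01 y t * κ01 (ξ l) t) (κ y t * κ02 (ξ l) t)
        calc |(κ02 y t * κ (ξ l) t + κ01 y t * κ01 (ξ l) t)
            + (κ01 y t * κ01 (ξ l) t + κ y t * κ02 (ξ l) t)| ≤ 4 * CK ^ 2 := by linarith)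
    have heq : (4 * CK ^ 2) / (24 * (m:ℝ) ^ 2) = ε1 := by rw [hε1]; ring
    rw [← heq]
    simpa [hξ, hS] using h
  -- midpoint rule in the first variable
  have hmid2 : ∀ x ∈ I01, ∀ i ∈ S,
      |(∫ t in (0:ℝ)..1, κ t x * κ t (ξ i)) - (1 / m) * ∑ l ∈ S, κ (ξ l) x * κ (ξ l) (ξ i)|
        ≤ ε1 := by
    intro x hx i hi
    have him := hξmem i hi
    have h := midpoint_rule (m := m) (f := fun t => κ t x * κ t (ξ i))
      (f' := fun t => κ10 t x * κ t (ξ i) + κ t x * κ10 t (ξ i))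
      (f'' := fun t => (κ20 t x * κ t (ξ i) + κ10 t x * κ10 t (ξ i))
        + (κ10 t x * κ10 t (ξ i) + κ t x * κ20 t (ξ i)))
      (M := 4 * CK ^ 2) hm
      (fun t ht => (hd10 t ht x hx).mul (hd10 t ht (ξ i) him))
      (fun t ht => ((hd20 t ht x hx).mul (hd10 t ht (ξ i) him)).add
        ((hd10 t ht x hx).mul (hd20 t ht (ξ i) him)))
      (fun t ht => by
        have b1 := prod_bd _ _ (hbd t ht x hx).2.2.2.1 (hbd t ht (ξ i) him).1
        have b2 := prod_bd _ _ (hbd t ht x hx).2.1 (hbd t ht (ξ i) him).2.1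
        have b3 := prod_bd _ _ (hbd t ht x hx).1 (hbd t ht (ξ i) him).2.2.2.1
        have hineq := abs_add_le (κ20 t x * κ t (ξ i) + κ10 t x * κ10 t (ξ i))
          (κ10 t x * κ10 t (ξ i) + κ t x * κ20 t (ξ i))
        have hineq1 := abs_add_le (κ20 t x * κ t (ξ i)) (κ10 t x * κ10 t (ξ i))
        have hineq2 := abs_add_le (κ10 t x * κ10 t (ξ i)) (κ t x * κ20 t (ξ i))
        calc |(κ20 t x * κ t (ξ i) + κ10 t x * κ10 t (ξ i))
            + (κ10 t x * κ10 t (ξ i) + κ t x * κ20 t (ξ i))| ≤ 4 * CK ^ 2 := by linarith)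
    have heq : (4 * CK ^ 2) / (24 * (m:ℝ) ^ 2) = ε1 := by rw [hε1]; ring
    rw [← heq]
    simpa [hξ, hS] using h
  -- value of F as a sum of integrals
  have hPval : ∀ y ∈ I01, F y = c0 * ∑ l ∈ S, w l * (∫ t in (0:ℝ)..1, κ y t * κ (ξ l) t) := by
    intro y hy
    have hpt : ∀ z', κ y z' * vt z' = ∑ l ∈ S, (c0 * w l) * (κ y z' * κ (ξ l) z') := by
      intro z'
      rw [hvt z', Finset.mul_sum, Finset.mul_sum]
      apply Finset.sum_congr rfl
      intros; ring
    calc F y = ∫ z' in (0:ℝ)..1, ∑ l ∈ S, (c0 * w l) * (κ y z' * κ (ξ l) z') := by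
          simp only [hF]
          exact intervalIntegral.integral_congr (fun z' _ => hpt z')
      _ = ∑ l ∈ S, ∫ z' in (0:ℝ)..1, (c0 * w l) * (κ y z' * κ (ξ l) z') :=
          intervalIntegral.integral_finset_sum (fun l hl =>
            ((continuousOn_const.mul ((hcy y hy).mul
              (hcy (ξ l) (hξmem l hl)))).intervalIntegrable_of_Icc h01))
      _ = ∑ l ∈ S, (c0 * w l) * ∫ t in (0:ℝ)..1, κ y t * κ (ξ l) t := by
          apply Finset.sum_congr rfl
          intro l hl
          exact intervalIntegral.integral_const_mul _ _
      _ = c0 * ∑ l ∈ S, w l * ∫ t in (0:ℝ)..1, κ y t * κ (ξ l) t := by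
          rw [Finset.mul_sum]
          apply Finset.sum_congr rfl
          intros; ring
  -- the two discrete swap identities
  have hswapA : ∀ y : ℝ, ∑ l ∈ S, w l * ((1 / m) * ∑ i ∈ S, κ y (ξ i) * κ (ξ l) (ξ i))
      = σt * ∑ i ∈ S, z i * κ y (ξ i) := by
    intro y
    calc ∑ l ∈ S, w l * ((1 / m) * ∑ i ∈ S, κ y (ξ i) * κ (ξ l) (ξ i))
        = ∑ l ∈ S, ∑ i ∈ S, κ y (ξ i) * ((κ (ξ l) (ξ i) / m) * w l) := by
          apply Finset.sum_congr rfl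
          intro l hl
          rw [Finset.mul_sum, Finset.mul_sum]
          apply Finset.sum_congr rfl
          intros; ring
      _ = ∑ i ∈ S, κ y (ξ i) * ∑ l ∈ S, (κ (ξ l) (ξ i) / m) * w l := by
          rw [Finset.sum_comm]
          apply Finset.sum_congr rfl
          intros; rw [Finset.mul_sum]
      _ = ∑ i ∈ S, κ y (ξ i) * (σt * z i) :=
          Finset.sum_congr rfl (fun i hi => by rw [hAt i hi])
      _ = σt * ∑ i ∈ S, z i * κ y (ξ i) := by
          rw [Finset.mul_sum]
          apply Finset.sum_congr rfl
          intros; ring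
  have hswapB : ∀ x : ℝ, ∑ i ∈ S, z i * ((1 / m) * ∑ l ∈ S, κ (ξ l) x * κ (ξ l) (ξ i))
      = σt * ∑ l ∈ S, w l * κ (ξ l) x := by
    intro x
    calc ∑ i ∈ S, z i * ((1 / m) * ∑ l ∈ S, κ (ξ l) x * κ (ξ l) (ξ i))
        = ∑ i ∈ S, ∑ l ∈ S, κ (ξ l) x * ((κ (ξ l) (ξ i) / m) * z i) := by
          apply Finset.sum_congr rfl
          intro i hi
          rw [Finset.mul_sum, Finset.mul_sum]
          apply Finset.sum_congr rfl
          intros; ring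
      _ = ∑ l ∈ S, κ (ξ l) x * ∑ i ∈ S, (κ (ξ l) (ξ i) / m) * z i := by
          rw [Finset.sum_comm]
          apply Finset.sum_congr rfl
          intros; rw [Finset.mul_sum]
      _ = ∑ l ∈ S, κ (ξ l) x * (σt * w l) :=
          Finset.sum_congr rfl (fun l hl => by rw [hA l hl])
      _ = σt * ∑ l ∈ S, w l * κ (ξ l) x := by
          rw [Finset.mul_sum]
          apply Finset.sum_congr rfl
          intros; ring
  -- approximation of F by Q
  have hPQ : ∀ y ∈ I01, |F y - Q y| ≤ (1 / σt) * ε1 := by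
    intro y hy
    have hQy : Q y = c0 * ∑ l ∈ S, w l * ((1 / m) * ∑ i ∈ S, κ y (ξ i) * κ (ξ l) (ξ i)) := by
      simp only [hQ]
      rw [hswapA y]
    have e1 : F y - Q y = c0 * ∑ l ∈ S, w l *
        ((∫ t in (0:ℝ)..1, κ y t * κ (ξ l) t)
          - (1 / m) * ∑ i ∈ S, κ y (ξ i) * κ (ξ l) (ξ i)) := by
      rw [hPval y hy, hQy, ← mul_sub, ← Finset.sum_sub_distrib]
      congr 1
      apply Finset.sum_congr rfl
      intros; ring
    rw [e1, abs_mul, abs_of_pos hc0pos]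
    calc c0 * |∑ l ∈ S, w l * ((∫ t in (0:ℝ)..1, κ y t * κ (ξ l) t)
          - (1 / m) * ∑ i ∈ S, κ y (ξ i) * κ (ξ l) (ξ i))|
        ≤ c0 * ∑ l ∈ S, |w l| * ε1 := by
          apply mul_le_mul_of_nonneg_left _ hc0pos.le
          calc |∑ l ∈ S, w l * ((∫ t in (0:ℝ)..1, κ y t * κ (ξ l) t)
                - (1 / m) * ∑ i ∈ S, κ y (ξ i) * κ (ξ l) (ξ i))|
              ≤ ∑ l ∈ S, |w l * ((∫ t in (0:ℝ)..1, κ y t * κ (ξ l) t)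
                - (1 / m) * ∑ i ∈ S, κ y (ξ i) * κ (ξ l) (ξ i))| :=
                Finset.abs_sum_le_sum_abs _ _
            _ ≤ ∑ l ∈ S, |w l| * ε1 := Finset.sum_le_sum (fun l hl => by
                rw [abs_mul]
                exact mul_le_mul_of_nonneg_left (hmid1 y hy l hl) (abs_nonneg _))
      _ = c0 * ((∑ l ∈ S, |w l|) * ε1) := by rw [Finset.sum_mul]
      _ ≤ c0 * (Real.sqrt m * ε1) :=
          mul_le_mul_of_nonneg_left (mul_le_mul_of_nonneg_right hcs hε1nn) hc0pos.le
      _ = (1 / σt) * ε1 := by rw [hc0]; field_simp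
  -- continuity of F
  have hIl : ∀ l ∈ S, ContinuousOn (fun y => ∫ t in (0:ℝ)..1, κ y t * κ (ξ l) t) I01 := by
    intro l hl
    apply lipschitz_continuousOn (L := CK ^ 2)
    intro y hy y' hy'
    have hdiff : (∫ t in (0:ℝ)..1, κ y t * κ (ξ l) t) - (∫ t in (0:ℝ)..1, κ y' t * κ (ξ l) t)
        = ∫ t in (0:ℝ)..1, (κ y t - κ y' t) * κ (ξ l) t := by
      rw [← intervalIntegral.integral_sub (f := fun t => κ y t * κ (ξ l) t) (g := fun t => κ y' t * κ (ξ l) t)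
        (((hcy y hy).mul (hcy (ξ l) (hξmem l hl))).intervalIntegrable_of_Icc h01)
        (((hcy y' hy').mul (hcy (ξ l) (hξmem l hl))).intervalIntegrable_of_Icc h01)]
      apply intervalIntegral.integral_congr
      intro t ht
      dsimp only
      ring
    rw [hdiff]
    have hb := intervalIntegral.norm_integral_le_of_norm_le_const
      (C := CK * |y - y'| * CK)
      (f := fun t => (κ y t - κ y' t) * κ (ξ l) t) (fun t ht => by
        have htI := hIoc ht
        rw [Real.norm_eq_abs, abs_mul]
        exact mul_le_mul (hlip1 t htI y hy y' hy') (hbd _ (hξmem l hl) _ htI).1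
          (abs_nonneg _) (by positivity))
    rw [Real.norm_eq_abs] at hb
    calc |∫ t in (0:ℝ)..1, (κ y t - κ y' t) * κ (ξ l) t|
        ≤ CK * |y - y'| * CK * |1 - (0:ℝ)| := hb
      _ = CK ^ 2 * |y - y'| := by rw [abs_of_nonneg (by norm_num : (0:ℝ) ≤ 1 - 0)]; ring
  have hFcont : ContinuousOn F I01 :=
    ContinuousOn.congr
      (f := fun y => c0 * ∑ l ∈ S, w l * (∫ t in (0:ℝ)..1, κ y t * κ (ξ l) t))
      (continuousOn_const.mul (continuousOn_finset_sum S
        (fun l hl => continuousOn_const.mul (hIl l hl))))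
      (fun y hy => hPval y hy)
  -- pointwise main bound
  set B : ℝ := CK ^ 2 / (6 * (m : ℝ) ^ 2) + CK ^ 3 / (6 * σt * (m : ℝ) ^ 2) with hB
  have hB0 : 0 ≤ B := by positivity
  have hmain : ∀ x ∈ I01, |(∫ y in (0:ℝ)..1, κ y x * F y) - σt ^ 2 * vt x| ≤ B := by
    intro x hx
    have hiQ : IntervalIntegrable (fun y => κ y x * Q y) volume 0 1 :=
      ((hcx x hx).mul hQcont).intervalIntegrable_of_Icc h01
    have hiE : IntervalIntegrable (fun y => κ y x * (F y - Q y)) volume 0 1 :=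
      ((hcx x hx).mul (hFcont.sub hQcont)).intervalIntegrable_of_Icc h01
    have hsplit : (∫ y in (0:ℝ)..1, κ y x * F y)
        = (∫ y in (0:ℝ)..1, κ y x * Q y) + ∫ y in (0:ℝ)..1, κ y x * (F y - Q y) := by
      rw [← intervalIntegral.integral_add hiQ hiE]
      apply intervalIntegral.integral_congr
      intro y hy
      dsimp only
      ring
    have hEb : |∫ y in (0:ℝ)..1, κ y x * (F y - Q y)| ≤ CK * ((1 / σt) * ε1) := by
      have hb := intervalIntegral.norm_integral_le_of_norm_le_const
        (C := CK * ((1 / σt) * ε1)) (f := fun y => κ y x * (F y - Q y)) (fun y hy => by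
          have hyI := hIoc hy
          rw [Real.norm_eq_abs, abs_mul]
          exact mul_le_mul (hbd y hyI x hx).1 (hPQ y hyI) (abs_nonneg _) hCK)
      rw [Real.norm_eq_abs] at hb
      calc |∫ y in (0:ℝ)..1, κ y x * (F y - Q y)|
          ≤ CK * ((1 / σt) * ε1) * |1 - (0:ℝ)| := hb
        _ = CK * ((1 / σt) * ε1) := by norm_num
    have hAval : (∫ y in (0:ℝ)..1, κ y x * Q y)
        = (c0 * σt) * ∑ i ∈ S, z i * (∫ t in (0:ℝ)..1, κ t x * κ t (ξ i)) := by
      have hpt : ∀ y, κ y x * Q y = ∑ i ∈ S, ((c0 * σt) * z i) * (κ y x * κ y (ξ i)) := by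
        intro y
        simp only [hQ]
        rw [Finset.mul_sum, Finset.mul_sum, Finset.mul_sum]
        apply Finset.sum_congr rfl
        intros; ring
      calc (∫ y in (0:ℝ)..1, κ y x * Q y)
          = ∫ y in (0:ℝ)..1, ∑ i ∈ S, ((c0 * σt) * z i) * (κ y x * κ y (ξ i)) :=
            intervalIntegral.integral_congr (fun y _ => hpt y)
        _ = ∑ i ∈ S, ∫ y in (0:ℝ)..1, ((c0 * σt) * z i) * (κ y x * κ y (ξ i)) :=
            intervalIntegral.integral_finset_sum (fun i hi =>
              ((continuousOn_const.mul ((hcx x hx).mul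
                (hcx (ξ i) (hξmem i hi)))).intervalIntegrable_of_Icc h01))
        _ = ∑ i ∈ S, ((c0 * σt) * z i) * ∫ t in (0:ℝ)..1, κ t x * κ t (ξ i) := by
            apply Finset.sum_congr rfl
            intro i hi
            exact intervalIntegral.integral_const_mul _ _
        _ = (c0 * σt) * ∑ i ∈ S, z i * ∫ t in (0:ℝ)..1, κ t x * κ t (ξ i) := by
            rw [Finset.mul_sum]
            apply Finset.sum_congr rfl
            intros; ring
    have hvx : σt ^ 2 * vt x
        = (c0 * σt) * ∑ i ∈ S, z i * ((1 / m) * ∑ l ∈ S, κ (ξ l) x * κ (ξ l) (ξ i)) := by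
      rw [hvt x, hswapB x]
      ring
    have hA2' : (∫ y in (0:ℝ)..1, κ y x * Q y) - σt ^ 2 * vt x
        = (c0 * σt) * ∑ i ∈ S, z i *
          ((∫ t in (0:ℝ)..1, κ t x * κ t (ξ i))
            - (1 / m) * ∑ l ∈ S, κ (ξ l) x * κ (ξ l) (ξ i)) := by
      rw [hAval, hvx, ← mul_sub, ← Finset.sum_sub_distrib]
      congr 1
      apply Finset.sum_congr rfl
      intros; ring
    have hAb : |(∫ y in (0:ℝ)..1, κ y x * Q y) - σt ^ 2 * vt x| ≤ ε1 := by
      rw [hA2', abs_mul, abs_of_pos (by positivity : (0:ℝ) < c0 * σt)]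
      calc (c0 * σt) * |∑ i ∈ S, z i *
            ((∫ t in (0:ℝ)..1, κ t x * κ t (ξ i))
              - (1 / m) * ∑ l ∈ S, κ (ξ l) x * κ (ξ l) (ξ i))|
          ≤ (c0 * σt) * ∑ i ∈ S, |z i| * ε1 := by
            apply mul_le_mul_of_nonneg_left _ (by positivity)
            calc |∑ i ∈ S, z i * ((∫ t in (0:ℝ)..1, κ t x * κ t (ξ i))
                  - (1 / m) * ∑ l ∈ S, κ (ξ l) x * κ (ξ l) (ξ i))|
                ≤ ∑ i ∈ S, |z i * ((∫ t in (0:ℝ)..1, κ t x * κ t (ξ i))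
                  - (1 / m) * ∑ l ∈ S, κ (ξ l) x * κ (ξ l) (ξ i))| :=
                  Finset.abs_sum_le_sum_abs _ _
              _ ≤ ∑ i ∈ S, |z i| * ε1 := Finset.sum_le_sum (fun i hi => by
                  rw [abs_mul]
                  exact mul_le_mul_of_nonneg_left (hmid2 x hx i hi) (abs_nonneg _))
        _ = (c0 * σt) * ((∑ i ∈ S, |z i|) * ε1) := by rw [Finset.sum_mul]
        _ ≤ (c0 * σt) * (Real.sqrt m * ε1) :=
            mul_le_mul_of_nonneg_left (mul_le_mul_of_nonneg_right hcsz hε1nn) (by positivity)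
        _ = ε1 := by rw [hc0]; field_simp
    calc |(∫ y in (0:ℝ)..1, κ y x * F y) - σt ^ 2 * vt x|
        = |((∫ y in (0:ℝ)..1, κ y x * Q y) - σt ^ 2 * vt x)
            + ∫ y in (0:ℝ)..1, κ y x * (F y - Q y)| := by rw [hsplit, add_sub_right_comm]
      _ ≤ |(∫ y in (0:ℝ)..1, κ y x * Q y) - σt ^ 2 * vt x|
            + |∫ y in (0:ℝ)..1, κ y x * (F y - Q y)| := abs_add_le _ _
      _ ≤ ε1 + CK * ((1 / σt) * ε1) := add_le_add hAb hEb
      _ = B := by rw [hB, hε1]; field_simp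
  -- continuity of the outer integral
  have hFb : ∀ y ∈ I01, |F y| ≤ CK * (CK / σt) := by
    intro y hy
    have hb := intervalIntegral.norm_integral_le_of_norm_le_const
      (C := CK * (CK / σt)) (f := fun z' => κ y z' * vt z') (fun t ht => by
        have htI := hIoc ht
        rw [Real.norm_eq_abs, abs_mul]
        exact mul_le_mul (hbd y hy t htI).1 (hvtb t htI) (abs_nonneg _) hCK)
    rw [Real.norm_eq_abs] at hb
    simp only [hF]
    calc |∫ z' in (0:ℝ)..1, κ y z' * vt z'| ≤ CK * (CK / σt) * |1 - (0:ℝ)| := hb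
      _ = CK * (CK / σt) := by norm_num
  have hGcont : ContinuousOn (fun x => ∫ y in (0:ℝ)..1, κ y x * F y) I01 := by
    apply lipschitz_continuousOn (L := CK * (CK * (CK / σt)))
    intro x hx x' hx'
    have hdiff : (∫ y in (0:ℝ)..1, κ y x * F y) - (∫ y in (0:ℝ)..1, κ y x' * F y)
        = ∫ y in (0:ℝ)..1, (κ y x - κ y x') * F y := by
      rw [← intervalIntegral.integral_sub (f := fun y => κ y x * F y) (g := fun y => κ y x' * F y)
        (((hcx x hx).mul hFcont).intervalIntegrable_of_Icc h01)
        (((hcx x' hx').mul hFcont).intervalIntegrable_of_Icc h01)]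
      apply intervalIntegral.integral_congr
      intro y hy
      dsimp only
      ring
    have hb := intervalIntegral.norm_integral_le_of_norm_le_const
      (C := (CK * |x - x'|) * (CK * (CK / σt)))
      (f := fun y => (κ y x - κ y x') * F y) (fun y hy => by
        have hyI := hIoc hy
        rw [Real.norm_eq_abs, abs_mul]
        exact mul_le_mul (hlip2 y hyI x hx x' hx') (hFb y hyI) (abs_nonneg _)
          (by positivity))
    rw [Real.norm_eq_abs] at hb
    rw [hdiff]
    calc |∫ y in (0:ℝ)..1, (κ y x - κ y x') * F y|
        ≤ (CK * |x - x'|) * (CK * (CK / σt)) * |1 - (0:ℝ)| := hb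
      _ = CK * (CK * (CK / σt)) * |x - x'| := by
          rw [abs_of_nonneg (by norm_num : (0:ℝ) ≤ 1 - 0)]; ring
  -- conclusion
  have hhcont : ContinuousOn (fun x => ((∫ y in (0:ℝ)..1, κ y x * F y) - σt ^ 2 * vt x) ^ 2) I01 :=
    ((hGcont.sub (continuousOn_const.mul hvtcont)).pow 2)
  have hint1 : IntervalIntegrable
      (fun x => ((∫ y in (0:ℝ)..1, κ y x * F y) - σt ^ 2 * vt x) ^ 2) volume 0 1 :=
    hhcont.intervalIntegrable_of_Icc h01
  have key : (∫ x in (0:ℝ)..1, ((∫ y in (0:ℝ)..1, κ y x * F y) - σt ^ 2 * vt x) ^ 2) ≤ B ^ 2 := by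
    calc (∫ x in (0:ℝ)..1, ((∫ y in (0:ℝ)..1, κ y x * F y) - σt ^ 2 * vt x) ^ 2)
        ≤ ∫ _x in (0:ℝ)..1, B ^ 2 := by
          apply intervalIntegral.integral_mono_on h01 hint1 intervalIntegrable_const
          intro x hx
          have h1 := hmain x hx
          calc ((∫ y in (0:ℝ)..1, κ y x * F y) - σt ^ 2 * vt x) ^ 2
              = |(∫ y in (0:ℝ)..1, κ y x * F y) - σt ^ 2 * vt x| ^ 2 := (sq_abs _).symm
            _ ≤ B ^ 2 := pow_le_pow_left₀ (abs_nonneg _) h1 2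
      _ = B ^ 2 := by simp
  calc Real.sqrt (∫ x in (0:ℝ)..1, ((∫ y in (0:ℝ)..1, κ y x * F y) - σt ^ 2 * vt x) ^ 2)
      ≤ Real.sqrt (B ^ 2) := Real.sqrt_le_sqrt key
    _ = B := Real.sqrt_sq hB0
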